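/- Let r ≥ 1, d ≥ 3, and consider the ideal I := ⟨x_0^{d−1}, …, x_{2r−1}^{d−1}⟩ ⊆ ℂ[x_0, …, x_{2r−1}]. Let β₁, β₂, c₁, c₂ ∈ ℂ∖{0} with β₁ ≠ β₂, and for i = 1, 2 define R_i := c_i · Π_{j=1}^{r} ( Σ_{l=0}^{d−2} x_{2j−2}^{d−2−l} β_i^{l} x_{2j−1}^{l} ) (equivalently R_i = c_i Π_{j=1}^{r} (x_{2j−2}^{d−1} − (β_i x_{2j−1})^{d−1})/(x_{2j−2} − β_i x_{2j−1})). Then for every e ≥ 0 one has (I : R₁)_e ∩ (I : R₂)_e = (I : R₁ + R₂)_e if and only if e ≠ (d−2)·r. -/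

import Mathlib

open MvPolynomial Finset

namespace CPaux

variable {r : ℕ}

def i0 (j : Fin r) : Fin (2 * r) := ⟨2 * j.val, by have := j.isLt; omega⟩
def i1 (j : Fin r) : Fin (2 * r) := ⟨2 * j.val + 1, by have := j.isLt; omega⟩

@[simp] lemma i0_eq_i0 {j j' : Fin r} : i0 j = i0 j' ↔ j = j' := by
  simp [i0, Fin.ext_iff]
@[simp] lemma i1_eq_i1 {j j' : Fin r} : i1 j = i1 j' ↔ j = j' := by
  simp [i1, Fin.ext_iff]
@[simp] lemma i0_ne_i1 {j j' : Fin r} : ¬ (i0 j = i1 j') := by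
  simp [i0, i1, Fin.ext_iff]; omega
@[simp] lemma i1_ne_i0 {j j' : Fin r} : ¬ (i1 j = i0 j') := by
  simp [i0, i1, Fin.ext_iff]; omega

def pe : Fin r × Fin 2 ≃ Fin (2 * r) where
  toFun x := ⟨2 * x.1.val + x.2.val, by have := x.1.isLt; have := x.2.isLt; omega⟩
  invFun k := (⟨k.val / 2, by have := k.isLt; omega⟩, ⟨k.val % 2, by omega⟩)
  left_inv := by
    rintro ⟨j, b⟩
    have := j.isLt; have := b.isLt
    ext <;> simp <;> omega
  right_inv := by
    intro k
    have := k.isLt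
    ext
    simp
    omega

lemma sum_pairs {M : Type*} [AddCommMonoid M] (F : Fin (2 * r) → M) :
    ∑ k, F k = ∑ j : Fin r, (F (i0 j) + F (i1 j)) := by
  rw [← pe.sum_comp F, Fintype.sum_prod_type]
  refine Finset.sum_congr rfl fun j _ => ?_
  rw [Fin.sum_univ_two]
  congr 1

/-- canonical pair-structured exponent -/
noncomputable def PS (F G : Fin r → ℕ) : Fin (2 * r) →₀ ℕ :=
  ∑ j : Fin r, (Finsupp.single (i0 j) (F j) + Finsupp.single (i1 j) (G j))

@[simp] lemma PS_i0 (F G : Fin r → ℕ) (j0 : Fin r) : PS F G (i0 j0) = F j0 := by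
  rw [PS, Finsupp.finset_sum_apply]
  simp [Finsupp.single_apply]
@[simp] lemma PS_i1 (F G : Fin r → ℕ) (j0 : Fin r) : PS F G (i1 j0) = G j0 := by
  rw [PS, Finsupp.finset_sum_apply]
  simp [Finsupp.single_apply]

lemma k_cases (k : Fin (2 * r)) : ∃ j : Fin r, k = i0 j ∨ k = i1 j := by
  refine ⟨⟨k.val / 2, by have := k.isLt; omega⟩, ?_⟩
  have := k.isLt
  rcases Nat.even_or_odd k.val with h | h
  · left; rcases h with ⟨m, hm⟩; simp [i0, Fin.ext_iff]; omega
  · right; rcases h with ⟨m, hm⟩; simp [i1, Fin.ext_iff]; omega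

def hh (k : Fin (2 * r)) : Fin r := ⟨k.val / 2, by have := k.isLt; omega⟩

@[simp] lemma hh_i0 (j : Fin r) : hh (i0 j) = j := by
  ext; simp only [hh, i0]; omega
@[simp] lemma hh_i1 (j : Fin r) : hh (i1 j) = j := by
  ext; simp only [hh, i1]; omega
@[simp] lemma i0_mod (j : Fin r) : (i0 j).val % 2 = 0 := by simp [i0]
@[simp] lemma i1_mod (j : Fin r) : (i1 j).val % 2 = 1 := by simp only [i1]; omega

noncomputable def sig (t : Fin (2 * r) →₀ ℕ) : Fin r →₀ ℕ :=
  Finsupp.equivFunOnFinite.symm fun j => t (i0 j) + t (i1 j)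

@[simp] lemma sig_apply (t : Fin (2 * r) →₀ ℕ) (j : Fin r) : sig t j = t (i0 j) + t (i1 j) := rfl

def Ev (t : Fin (2 * r) →₀ ℕ) : ℕ := ∑ j : Fin r, t (i0 j)

noncomputable def mm (D : ℕ) : Fin (2 * r) →₀ ℕ := Finsupp.equivFunOnFinite.symm fun _ => D
noncomputable def om (D : ℕ) : Fin r →₀ ℕ := Finsupp.equivFunOnFinite.symm fun _ => D

@[simp] lemma mm_apply (D : ℕ) (k : Fin (2 * r)) : mm D k = D := rfl
@[simp] lemma om_apply (D : ℕ) (j : Fin r) : om D j = D := rfl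

lemma degree_eq_sum {n : ℕ} (t : Fin n →₀ ℕ) : t.degree = ∑ k, t k :=
  Finset.sum_subset (Finset.subset_univ _)
    (fun x _ hx => by simpa using Finsupp.notMem_support_iff.mp hx)


@[simp] lemma sig_PS (F G : Fin r → ℕ) : sig (PS F G) = Finsupp.equivFunOnFinite.symm fun j => F j + G j := by
  ext j; simp

lemma Ev_PS (F G : Fin r → ℕ) : Ev (PS F G) = ∑ j, F j := by
  simp [Ev]

lemma degree_PS (F G : Fin r → ℕ) : (PS F G).degree = ∑ j, (F j + G j) := by
  rw [degree_eq_sum, sum_pairs]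
  simp

lemma prod_monomial {ι σ' : Type*} (s : Finset ι) (u : ι → (σ' →₀ ℕ)) (w : ι → ℂ) :
    ∏ k ∈ s, (monomial (u k) (w k) : MvPolynomial σ' ℂ) =
      monomial (∑ k ∈ s, u k) (∏ k ∈ s, w k) := by
  classical
  induction s using Finset.induction_on with
  | empty => simp [MvPolynomial.monomial_zero']
  | @insert a s ha ih =>
    rw [Finset.prod_insert ha, ih, Finset.prod_insert ha, Finset.sum_insert ha, monomial_mul]

/-- the substitution `x_{2j} ↦ β y_j`, `x_{2j+1} ↦ y_j`. -/
noncomputable def pib (β : ℂ) : MvPolynomial (Fin (2 * r)) ℂ →ₐ[ℂ] MvPolynomial (Fin r) ℂ :=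
  aeval fun k : Fin (2 * r) =>
    (C (β ^ (if k.val % 2 = 0 then 1 else 0)) : MvPolynomial (Fin r) ℂ) * X (hh k)

lemma pib_monomial (β : ℂ) (t : Fin (2 * r) →₀ ℕ) (z : ℂ) :
    pib β (monomial t z) = monomial (sig t) (z * β ^ Ev t) := by
  rw [pib, aeval_monomial]
  have h1 : (t.prod fun k n =>
      ((C (β ^ (if k.val % 2 = 0 then 1 else 0)) : MvPolynomial (Fin r) ℂ) * X (hh k)) ^ n)
      = C (β ^ Ev t) * monomial (sig t) 1 := by
    rw [Finsupp.prod]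
    simp_rw [mul_pow, ← C_pow, ← pow_mul, X_pow_eq_monomial]
    rw [Finset.prod_mul_distrib, ← map_prod, Finset.prod_pow_eq_pow_sum, prod_monomial]
    congr 2
    · rw [Finset.sum_subset (Finset.subset_univ t.support)
        (fun k _ hk => by simp [Finsupp.notMem_support_iff.mp hk]),
        sum_pairs]
      simp [Ev]
    · congr 1
      rw [Finset.sum_subset (Finset.subset_univ t.support)
        (fun k _ hk => by simp [Finsupp.notMem_support_iff.mp hk]),
        sum_pairs]
      simp only [hh_i0, hh_i1]
      ext j
      rw [Finsupp.finset_sum_apply]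
      simp [Finsupp.single_apply, Finset.sum_add_distrib]
    · simp
  rw [h1, algebraMap_eq, ← mul_assoc, ← C_mul, C_mul_monomial, mul_one]


noncomputable def Rform (D : ℕ) (β c0 : ℂ) : MvPolynomial (Fin (2 * r)) ℂ :=
  C c0 * ∏ j : Fin r, ∑ l ∈ Finset.range (D + 1),
    X (i0 j) ^ (D - l) * C (β ^ l) * X (i1 j) ^ l

lemma factor_eq (D l : ℕ) (β : ℂ) (j : Fin r) :
    (X (i0 j) : MvPolynomial (Fin (2 * r)) ℂ) ^ (D - l) * C (β ^ l) * X (i1 j) ^ l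
    = monomial (Finsupp.single (i0 j) (D - l) + Finsupp.single (i1 j) l) (β ^ l) := by
  rw [X_pow_eq_monomial, X_pow_eq_monomial, mul_comm ((monomial (Finsupp.single (i0 j) (D - l)) 1 :
      MvPolynomial (Fin (2 * r)) ℂ)) (C (β ^ l)), C_mul_monomial, mul_one, monomial_mul, mul_one]

lemma Rform_eq (D : ℕ) (β c0 : ℂ) :
    Rform D β c0 = C c0 * ∑ p ∈ Fintype.piFinset (fun _ : Fin r => Finset.range (D + 1)),
      monomial (PS (fun j => D - p j) p) (β ^ ∑ j, p j) := by
  rw [Rform]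
  congr 1
  rw [Finset.prod_univ_sum]
  refine Finset.sum_congr rfl fun p _ => ?_
  simp_rw [factor_eq, prod_monomial, Finset.prod_pow_eq_pow_sum]
  rfl

lemma Rform_hom (D : ℕ) (β c0 : ℂ) : (Rform (r := r) D β c0).IsHomogeneous (D * r) := by
  rw [Rform_eq, ← zero_add (D * r)]
  refine (isHomogeneous_C _ _).mul (IsHomogeneous.sum _ _ _ fun p hp => ?_)
  refine isHomogeneous_monomial _ ?_
  rw [degree_PS]
  have hle : ∀ j, p j ≤ D := fun j => by
    have := (Fintype.mem_piFinset.mp hp) j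
    simpa using Nat.lt_succ_iff.mp (Finset.mem_range.mp this)
  calc ∑ j : Fin r, (D - p j + p j) = ∑ _j : Fin r, D :=
        Finset.sum_congr rfl fun j _ => by have := hle j; omega
    _ = D * r := by simp [Finset.sum_const, mul_comm]

lemma key (D : ℕ) (β c0 : ℂ) (P : MvPolynomial (Fin (2 * r)) ℂ) :
    coeff (mm D) (P * Rform D β c0) = c0 * coeff (om D) (pib β P) := by
  induction P using MvPolynomial.induction_on' with
  | add p q hp hq => simp [add_mul, map_add, hp, hq, mul_add]
  | monomial t z =>
    rw [Rform_eq, pib_monomial, coeff_monomial, mul_left_comm, coeff_C_mul, Finset.mul_sum]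
    simp_rw [monomial_mul, coeff_sum, coeff_monomial]
    congr 1
    by_cases hpair : sig t = om D
    · have hp : ∀ j, t (i0 j) + t (i1 j) = D := fun j => by
        have := DFunLike.congr_fun hpair j
        simpa using this
      rw [if_pos hpair]
      rw [Finset.sum_eq_single_of_mem (fun j => t (i0 j))]
      · rw [if_pos]
        · rfl
        · ext k
          obtain ⟨j, rfl | rfl⟩ := k_cases k
          · simp only [Finsupp.add_apply, PS_i0, mm_apply]
            have := hp j; omega
          · simp only [Finsupp.add_apply, PS_i1, mm_apply]
            have := hp j; omega
      · refine Fintype.mem_piFinset.mpr fun j => Finset.mem_range.mpr ?_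
        have := hp j; omega
      · intro p hpm hne
        rw [if_neg]
        intro hEq
        apply hne
        funext j
        have h1 := DFunLike.congr_fun hEq (i1 j)
        simp only [Finsupp.add_apply, PS_i1, mm_apply] at h1
        have := hp j; omega
    · rw [if_neg hpair]
      refine Finset.sum_eq_zero fun p hpm => ?_
      rw [if_neg]
      intro hEq
      apply hpair
      have hle : ∀ j, p j ≤ D := fun j => by
        have := (Fintype.mem_piFinset.mp hpm) j
        simpa using Nat.lt_succ_iff.mp (Finset.mem_range.mp this)
      ext j
      have h0 := DFunLike.congr_fun hEq (i0 j)
      have h1 := DFunLike.congr_fun hEq (i1 j)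
      simp only [Finsupp.add_apply, PS_i0, PS_i1, mm_apply] at h0 h1
      simp only [sig_apply, om_apply]
      have := hle j; omega

noncomputable def Ispan (r D : ℕ) : Ideal (MvPolynomial (Fin (2 * r)) ℂ) :=
  Ideal.span (Set.range fun k : Fin (2 * r) => (X k : MvPolynomial (Fin (2 * r)) ℂ) ^ (D + 1))

lemma mem_Ispan_iff (D : ℕ) (P : MvPolynomial (Fin (2 * r)) ℂ) :
    P ∈ Ispan r D ↔ ∀ a : Fin (2 * r) →₀ ℕ, (∀ k, a k ≤ D) → coeff a P = 0 := by
  constructor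
  · intro hP a ha
    obtain ⟨g, hg⟩ := Ideal.mem_span_range_iff_exists_fun.mp hP
    rw [← hg, coeff_sum]
    refine Finset.sum_eq_zero fun k _ => ?_
    rw [X_pow_eq_monomial, coeff_mul_monomial']
    rw [if_neg]
    intro hle
    have := Finsupp.single_le_iff.mp hle
    have := ha k
    omega
  · intro h
    rw [← P.support_sum_monomial_coeff]
    refine Ideal.sum_mem _ fun a ha => ?_
    by_cases hred : ∀ k, a k ≤ D
    · rw [h a hred]; simp
    · push_neg at hred
      obtain ⟨k, hk⟩ := hred
      have hle : Finsupp.single k (D + 1) ≤ a := Finsupp.single_le_iff.mpr (by omega)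
      have : (monomial a (coeff a P) : MvPolynomial (Fin (2 * r)) ℂ)
          = (X k ^ (D + 1)) * monomial (a - Finsupp.single k (D + 1)) (coeff a P) := by
        rw [X_pow_eq_monomial, monomial_mul, one_mul, add_tsub_cancel_of_le hle]
      rw [this]
      exact Ideal.mul_mem_right _ _ (Ideal.subset_span ⟨k, rfl⟩)


lemma mm_degree (D : ℕ) : (mm (r := r) D).degree = D * r + D * r := by
  rw [degree_eq_sum, sum_pairs]
  simp [Finset.sum_const, Fintype.card_fin, smul_eq_mul]
  ring

lemma colon_step {D e : ℕ} (β0 β1 c0 c1 : ℂ) (hc0 : c0 ≠ 0) (hc1 : c1 ≠ 0) (hββ : β0 ≠ β1)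
    (he : e ≠ D * r) (Q : MvPolynomial (Fin (2 * r)) ℂ) (hQ : Q.IsHomogeneous e)
    (hsum : (Rform (r := r) D β0 c0 + Rform D β1 c1) * Q ∈ Ispan r D) :
    Rform (r := r) D β0 c0 * Q ∈ Ispan r D ∧ Rform (r := r) D β1 c1 * Q ∈ Ispan r D := by
  -- the basic pairing equations
  have hTQ : ∀ t : Fin (2 * r) →₀ ℕ,
      c0 * coeff (om D) (pib β0 ((monomial t 1) * Q)) +
        c1 * coeff (om D) (pib β1 ((monomial t 1) * Q)) = 0 := by
    intro t
    have h1 : (monomial t 1) * ((Rform (r := r) D β0 c0 + Rform D β1 c1) * Q) ∈ Ispan r D :=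
      Ideal.mul_mem_left _ _ hsum
    have h2 := (mem_Ispan_iff D _).mp h1 (mm D) (fun k => le_rfl)
    have h3 : (monomial t (1:ℂ)) * ((Rform (r := r) D β0 c0 + Rform D β1 c1) * Q)
        = ((monomial t 1) * Q) * Rform D β0 c0 + ((monomial t 1) * Q) * Rform D β1 c1 := by
      ring
    rw [h3, coeff_add, key, key] at h2
    exact h2
  -- Step 1 : all small coefficients of the substituted polynomials vanish
  have hZ : ∀ b : Fin r →₀ ℕ, (∀ j, b j ≤ D) →
      coeff b (pib (r := r) β0 Q) = 0 ∧ coeff b (pib (r := r) β1 Q) = 0 := by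
    intro b hb
    by_cases hbo : b = om D
    · subst hbo
      have hz : ∀ β' c' : ℂ, c' ≠ 0 → coeff (om D) (pib (r := r) β' Q) = 0 := by
        intro β' c' hc'
        have hk := key (r := r) D β' c' Q
        have hz0 : coeff (mm (r := r) D) (Q * Rform D β' c') = 0 := by
          refine (hQ.mul (Rform_hom D β' c')).coeff_eq_zero ?_
          rw [mm_degree]
          omega
        rw [hz0] at hk
        exact (mul_eq_zero.mp hk.symm).resolve_left hc'
      exact ⟨hz β0 c0 hc0, hz β1 c1 hc1⟩
    · obtain ⟨js, hjs⟩ : ∃ j, b j < D := by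
        by_contra hcon
        push_neg at hcon
        exact hbo (by ext j; exact le_antisymm (hb j) (hcon j))
      -- test monomials
      have hEq : ∀ γ : ℕ, γ ≤ 1 →
          c0 * (β0 ^ γ * coeff b (pib (r := r) β0 Q)) +
            c1 * (β1 ^ γ * coeff b (pib (r := r) β1 Q)) = 0 := by
        intro γ hγ
        set tt : Fin (2 * r) →₀ ℕ := PS (fun j => if j = js then γ else 0)
          (fun j => (D - b j) - if j = js then γ else 0) with htt
        have hsig : ∀ j, sig tt j = D - b j := by
          intro j
          simp only [htt, sig_apply, PS_i0, PS_i1]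
          by_cases hj : j = js
          · subst hj; simp; omega
          · simp [hj]
        have hEv : Ev tt = γ := by
          rw [htt, Ev_PS]
          simp
        have hcoeff : ∀ β' : ℂ, coeff (om D) (pib (r := r) β' ((monomial tt 1) * Q))
            = β' ^ γ * coeff b (pib β' Q) := by
          intro β'
          have hle : sig tt ≤ om (r := r) D := by
            rw [Finsupp.le_def]
            intro j
            rw [hsig, om_apply]
            omega
          have hbb : om (r := r) D - sig tt = b := by
            ext j
            rw [Finsupp.tsub_apply, om_apply, hsig]
            have := hb j
            omega
          rw [map_mul, pib_monomial, one_mul, hEv, coeff_monomial_mul', if_pos hle, hbb]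
        have := hTQ tt
        rw [hcoeff β0, hcoeff β1] at this
        exact this
      have E0 := hEq 0 (by omega)
      have E1 := hEq 1 (by omega)
      rw [pow_zero, pow_zero, one_mul, one_mul] at E0
      rw [pow_one, pow_one] at E1
      set u := coeff b (pib (r := r) β0 Q)
      set v := coeff b (pib (r := r) β1 Q)
      have hv : (β1 - β0) * (c1 * v) = 0 := by linear_combination E1 - β0 * E0
      have hv0 : v = 0 := by
        rcases mul_eq_zero.mp hv with h | h
        · exact absurd (sub_eq_zero.mp h) (Ne.symm hββ)
        · exact (mul_eq_zero.mp h).resolve_left hc1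
      have hu0 : u = 0 := by
        rw [hv0, mul_zero, add_zero] at E0
        exact (mul_eq_zero.mp E0).resolve_left hc0
      exact ⟨hu0, hv0⟩
  -- Step 2 : conclude membership
  have hstep2 : ∀ (β' c' : ℂ),
      (∀ b : Fin r →₀ ℕ, (∀ j, b j ≤ D) → coeff b (pib (r := r) β' Q) = 0) →
      Rform (r := r) D β' c' * Q ∈ Ispan r D := by
    intro β' c' hzero
    rw [mem_Ispan_iff]
    intro a ha
    have h1 : coeff a (Rform (r := r) D β' c' * Q)
        = coeff (mm D) ((monomial (mm D - a) 1 * Q) * Rform D β' c') := by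
      have h2 : (monomial (mm (r := r) D - a) (1:ℂ) * Q) * Rform D β' c'
          = monomial (mm D - a) 1 * (Rform D β' c' * Q) := by ring
      rw [h2, coeff_monomial_mul', if_pos tsub_le_self, one_mul]
      congr 1
      ext k
      rw [Finsupp.tsub_apply, Finsupp.tsub_apply, mm_apply]
      have := ha k
      omega
    rw [h1, key, map_mul, pib_monomial, one_mul, coeff_monomial_mul']
    by_cases hle : sig (mm (r := r) D - a) ≤ om D
    · rw [if_pos hle]
      rw [hzero (om D - sig (mm D - a)) (fun j => by
        rw [Finsupp.tsub_apply, om_apply]; omega)]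
      ring
    · rw [if_neg hle, mul_zero]
  exact ⟨hstep2 β0 c0 (fun b hb => (hZ b hb).1), hstep2 β1 c1 (fun b hb => (hZ b hb).2)⟩


lemma reduced_eq_mm {D : ℕ} (a : Fin (2 * r) →₀ ℕ) (ha : ∀ k, a k ≤ D)
    (hdeg : a.degree = D * r + D * r) : a = mm (r := r) D := by
  have h2 : (2 * r) * D = D * r + D * r := by ring
  ext k
  rw [mm_apply]
  by_contra hne
  have hlt : a k < D := lt_of_le_of_ne (ha k) hne
  have h1 : ∑ k', a k' < ∑ _k' : Fin (2 * r), D :=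
    Finset.sum_lt_sum (fun i _ => ha i) ⟨k, Finset.mem_univ k, hlt⟩
  rw [← degree_eq_sum, hdeg] at h1
  simp only [Finset.sum_const, Finset.card_univ, Fintype.card_fin, smul_eq_mul] at h1
  omega

lemma witness {D : ℕ} (hr : 1 ≤ r) (hD : 1 ≤ D) (β0 β1 c0 c1 : ℂ)
    (hβ0 : β0 ≠ 0) (hβ1 : β1 ≠ 0) (hc0 : c0 ≠ 0) (hc1 : c1 ≠ 0) (hββ : β0 ≠ β1) :
    ∃ Q : MvPolynomial (Fin (2 * r)) ℂ, Q.IsHomogeneous (D * r) ∧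
      (Rform (r := r) D β0 c0 + Rform D β1 c1) * Q ∈ Ispan r D ∧
      Rform (r := r) D β0 c0 * Q ∉ Ispan r D := by
  have hDr : 1 ≤ D * r := Nat.one_le_iff_ne_zero.mpr (by positivity)
  obtain ⟨K', hK⟩ : ∃ K', D * r = K' + 1 := ⟨D * r - 1, by omega⟩
  have hrD : r * D = K' + 1 := by rw [mul_comm]; exact hK
  set j₀ : Fin r := ⟨0, hr⟩ with hj₀
  set q1 : Fin (2 * r) →₀ ℕ := PS (fun _ => D) (fun _ => 0) with hq1
  set q2 : Fin (2 * r) →₀ ℕ :=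
    PS (fun j => D - if j = j₀ then 1 else 0) (fun j => if j = j₀ then 1 else 0) with hq2
  set s : ℂ := c0 * β0 ^ K' + c1 * β1 ^ K' with hs
  set t : ℂ := -(c0 * β0 ^ (K' + 1) + c1 * β1 ^ (K' + 1)) with ht
  set Q : MvPolynomial (Fin (2 * r)) ℂ := monomial q1 s + monomial q2 t with hQdef
  have hs1 : sig q1 = om (r := r) D := by
    ext j; simp [hq1]
  have hs2 : sig q2 = om (r := r) D := by
    ext j
    simp only [hq2, sig_apply, PS_i0, PS_i1, om_apply]
    by_cases hj : j = j₀ <;> simp [hj] <;> omega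
  have hE1 : Ev q1 = K' + 1 := by
    rw [hq1, Ev_PS]
    simp only [Finset.sum_const, Finset.card_univ, Fintype.card_fin, smul_eq_mul]
    exact hrD
  have hE2 : Ev q2 = K' := by
    rw [hq2, Ev_PS]
    have hsplit : ∑ j : Fin r, (D - if j = j₀ then 1 else 0)
        = (∑ _j : Fin r, D) - ∑ j : Fin r, (if j = j₀ then 1 else 0) :=
      Finset.sum_tsub_distrib Finset.univ (fun j _ => by split <;> omega)
    rw [hsplit, Finset.sum_ite_eq' Finset.univ j₀ (fun _ => 1)]
    simp only [Finset.sum_const, Finset.card_univ, Fintype.card_fin, smul_eq_mul,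
      Finset.mem_univ, if_pos, hrD]
    omega
  have hQhom : Q.IsHomogeneous (D * r) := by
    refine IsHomogeneous.add (isHomogeneous_monomial _ ?_) (isHomogeneous_monomial _ ?_)
    · rw [hq1, degree_PS]
      simp only [add_zero, Finset.sum_const, Finset.card_univ, Fintype.card_fin, smul_eq_mul]
      omega
    · rw [hq2, degree_PS]
      have : ∀ j : Fin r, (D - if j = j₀ then 1 else 0) + (if j = j₀ then 1 else 0) = D :=
        fun j => by split <;> omega
      simp only [this, Finset.sum_const, Finset.card_univ, Fintype.card_fin, smul_eq_mul]
      omega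
  have hpc : ∀ β' : ℂ, coeff (om (r := r) D) (pib (r := r) β' Q)
      = s * β' ^ (K' + 1) + t * β' ^ K' := by
    intro β'
    rw [hQdef, map_add, pib_monomial, pib_monomial, hs1, hs2, hE1, hE2, coeff_add,
      coeff_monomial, coeff_monomial, if_pos rfl, if_pos rfl]
  refine ⟨Q, hQhom, ?_, ?_⟩
  · rw [mem_Ispan_iff]
    intro a ha
    by_cases hdeg : a.degree = D * r + D * r
    · have haeq := reduced_eq_mm a ha hdeg
      subst haeq
      have hsplit : (Rform (r := r) D β0 c0 + Rform D β1 c1) * Q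
          = Q * Rform D β0 c0 + Q * Rform D β1 c1 := by ring
      rw [hsplit, coeff_add, key, key, hpc β0, hpc β1, hs, ht]
      ring
    · exact IsHomogeneous.coeff_eq_zero
        (((Rform_hom D β0 c0).add (Rform_hom D β1 c1)).mul hQhom) hdeg
  · intro hmem
    have h0 := (mem_Ispan_iff D _).mp hmem (mm D) (fun k => le_rfl)
    rw [mul_comm (Rform (r := r) D β0 c0) Q, key, hpc β0] at h0
    have hval : c0 * (s * β0 ^ (K' + 1) + t * β0 ^ K')
        = c0 * (c1 * (β0 ^ K' * (β1 ^ K' * (β0 - β1)))) := by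
      rw [hs, ht]; ring
    rw [hval] at h0
    have : c0 * (c1 * (β0 ^ K' * (β1 ^ K' * (β0 - β1)))) ≠ 0 := by
      refine mul_ne_zero hc0 (mul_ne_zero hc1 (mul_ne_zero (pow_ne_zero _ hβ0)
        (mul_ne_zero (pow_ne_zero _ hβ1) (sub_ne_zero_of_ne hββ))))
    exact this h0

end CPaux


/-- The colon ideal `(I : P) = {Q : P·Q ∈ I}`. -/
def colonIdeal {A : Type*} [CommRing A] (I : Ideal A) (P : A) : Ideal A where
  carrier := {Q | P * Q ∈ I}
  zero_mem' := by simp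
  add_mem' := by
    intro a b ha hb
    simpa [mul_add] using I.add_mem ha hb
  smul_mem' := by
    intro c x hx
    simp only [Set.mem_setOf_eq, smul_eq_mul] at *
    rw [mul_comm c x, ← mul_assoc]
    exact I.mul_mem_right c hx

lemma mem_colonIdeal {A : Type*} [CommRing A] {I : Ideal A} {P Q : A} :
    Q ∈ colonIdeal I P ↔ P * Q ∈ I := Iff.rfl

/-- `J_e`: the set of homogeneous polynomials of degree `e` belonging to `J`. -/
def idealPiece {N : ℕ} (J : Ideal (MvPolynomial (Fin N) ℂ)) (e : ℕ) :
    Set (MvPolynomial (Fin N) ℂ) :=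
  {Q | Q ∈ J ∧ Q.IsHomogeneous e}

theorem colon_pieces_inter_eq_iff (r d : ℕ) (hr : 1 ≤ r) (hd : 3 ≤ d)
    (β c : Fin 2 → ℂ) (hβ : ∀ i, β i ≠ 0) (hc : ∀ i, c i ≠ 0) (hββ : β 0 ≠ β 1)
    (I : Ideal (MvPolynomial (Fin (2 * r)) ℂ))
    (hI : I = Ideal.span (Set.range fun k : Fin (2 * r) => (X k : MvPolynomial (Fin (2 * r)) ℂ) ^ (d - 1)))
    (R : Fin 2 → MvPolynomial (Fin (2 * r)) ℂ)
    (hR : ∀ i, R i = C (c i) *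
      ∏ j : Fin r, ∑ l ∈ Finset.range (d - 1),
        (X (⟨2 * (j : ℕ), by have := j.isLt; omega⟩ : Fin (2 * r))) ^ (d - 2 - l) *
          C (β i ^ l) *
          (X (⟨2 * (j : ℕ) + 1, by have := j.isLt; omega⟩ : Fin (2 * r))) ^ l) :
    ∀ e : ℕ,
      idealPiece (colonIdeal I (R 0)) e ∩ idealPiece (colonIdeal I (R 1)) e =
          idealPiece (colonIdeal I (R 0 + R 1)) e ↔
        e ≠ (d - 2) * r := by
  intro e
  obtain ⟨D', rfl⟩ : ∃ D', d = D' + 3 := ⟨d - 3, by omega⟩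
  set D : ℕ := D' + 1 with hDdef
  have hD : 1 ≤ D := by omega
  have h2 : D' + 3 - 2 = D := by omega
  have h1 : D' + 3 - 1 = D + 1 := by omega
  have hR' : ∀ i, R i = CPaux.Rform (r := r) D (β i) (c i) := by
    intro i
    rw [hR i]
    simp only [CPaux.Rform, CPaux.i0, CPaux.i1, h2, h1]
  have hI' : I = CPaux.Ispan r D := by
    rw [hI, CPaux.Ispan, h1]
  rw [h2]
  constructor
  · intro heq hecontra
    obtain ⟨Q, hQhom, hQmem, hQnot⟩ :=
      CPaux.witness (D := D) hr hD (β 0) (β 1) (c 0) (c 1) (hβ 0) (hβ 1) (hc 0) (hc 1) hββ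
    have hQRHS : Q ∈ idealPiece (colonIdeal I (R 0 + R 1)) e := by
      refine ⟨?_, ?_⟩
      · rw [mem_colonIdeal, hR' 0, hR' 1, hI']
        exact hQmem
      · rw [hecontra]
        exact hQhom
    rw [← heq] at hQRHS
    apply hQnot
    have h0 : Q ∈ colonIdeal I (R 0) := hQRHS.1.1
    rw [mem_colonIdeal, hR' 0, hI'] at h0
    exact h0
  · intro hne
    ext Q
    simp only [Set.mem_inter_iff, idealPiece, Set.mem_setOf_eq, mem_colonIdeal]
    constructor
    · rintro ⟨⟨h0, hh⟩, ⟨h1m, -⟩⟩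
      refine ⟨?_, hh⟩
      have hsplit : (R 0 + R 1) * Q = R 0 * Q + R 1 * Q := by ring
      rw [hsplit]
      exact I.add_mem h0 h1m
    · rintro ⟨hmem, hh⟩
      have hmem' : (CPaux.Rform (r := r) D (β 0) (c 0) + CPaux.Rform D (β 1) (c 1)) * Q
          ∈ CPaux.Ispan r D := by
        rw [← hR' 0, ← hR' 1, ← hI']
        exact hmem
      obtain ⟨m0, m1⟩ := CPaux.colon_step (β 0) (β 1) (c 0) (c 1)
        (hc 0) (hc 1) hββ hne Q hh hmem'
      refine ⟨⟨?_, hh⟩, ⟨?_, hh⟩⟩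
      · rw [hR' 0, hI']; exact m0
      · rw [hR' 1, hI']; exact m1
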